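/- Let G₁ and G₂ be groups, L a group, H ≤ G₁ and K ≤ G₂ subgroups, H₀ a normal subgroup of H and K₀ a normal subgroup of K. Let φ, φ′ : H → L be surjective homomorphisms with Ker φ = Ker φ′ = H₀ and ψ, ψ′ : K → L surjective homomorphisms with Ker ψ = Ker ψ′ = K₀. Then the amalgamated subgroups H ^φ×_L^ψ K and H ^{φ′}×_L^{ψ′} K are conjugate in G₁ × G₂ if and only if there exist a ∈ N_{G₁}(H) ∩ N_{G₁}(H₀), b ∈ N_{G₂}(K) ∩ N_{G₂}(K₀) and an automorphism γ of L such that φ(h) = γ(φ′(a⁻¹ h a)) for all h ∈ H and ψ(k) = γ(ψ′(b⁻¹ k b)) for all k ∈ K. -/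

import Mathlib

/-- The amalgamated subgroup `H ^φ×_L^ψ K = {(h,k) ∈ H × K : φ(h) = ψ(k)}` of `G₁ × G₂`. -/
def amalg {G₁ G₂ : Type*} [Group G₁] [Group G₂] (H : Subgroup G₁) (K : Subgroup G₂)
    {L : Type*} [Group L] (φ : H →* L) (ψ : K →* L) : Subgroup (G₁ × G₂) where
  carrier := {x | ∃ (h₁ : x.1 ∈ H) (h₂ : x.2 ∈ K), φ ⟨x.1, h₁⟩ = ψ ⟨x.2, h₂⟩}
  one_mem' := ⟨H.one_mem, K.one_mem, by
    show φ 1 = ψ 1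
    rw [map_one, map_one]⟩
  mul_mem' := by
    intro a b ha hb
    obtain ⟨ha₁, ha₂, hae⟩ := ha
    obtain ⟨hb₁, hb₂, hbe⟩ := hb
    refine ⟨H.mul_mem ha₁ hb₁, K.mul_mem ha₂ hb₂, ?_⟩
    show φ (⟨a.1, ha₁⟩ * ⟨b.1, hb₁⟩) = ψ (⟨a.2, ha₂⟩ * ⟨b.2, hb₂⟩)
    rw [map_mul, map_mul, hae, hbe]
  inv_mem' := by
    intro a ha
    obtain ⟨ha₁, ha₂, hae⟩ := ha
    refine ⟨H.inv_mem ha₁, K.inv_mem ha₂, ?_⟩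
    show φ (⟨a.1, ha₁⟩⁻¹) = ψ (⟨a.2, ha₂⟩⁻¹)
    rw [map_inv, map_inv, hae]

lemma mem_amalg {G₁ G₂ : Type*} [Group G₁] [Group G₂] {H : Subgroup G₁} {K : Subgroup G₂}
    {L : Type*} [Group L] {φ : H →* L} {ψ : K →* L} {x : G₁ × G₂} :
    x ∈ amalg H K φ ψ ↔ ∃ (h₁ : x.1 ∈ H) (h₂ : x.2 ∈ K), φ ⟨x.1, h₁⟩ = ψ ⟨x.2, h₂⟩ :=
  Iff.rfl

/-- Given `H₀ ⊴ H ≤ G₁`, `K₀ ⊴ K ≤ G₂` and epimorphisms `φ, φ′ : H → L` with kernel `H₀`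
and `ψ, ψ′ : K → L` with kernel `K₀`, the amalgamated subgroups `H ^φ×_L^ψ K` and
`H ^{φ′}×_L^{ψ′} K` are conjugate in `G₁ × G₂` iff there are
`a ∈ N_{G₁}(H) ∩ N_{G₁}(H₀)`, `b ∈ N_{G₂}(K) ∩ N_{G₂}(K₀)` and `γ ∈ Aut(L)` such that
`φ(h) = γ(φ′(a⁻¹ha))` for all `h ∈ H` and `ψ(k) = γ(ψ′(b⁻¹kb))` for all `k ∈ K`. -/
theorem amalg_conjugate_iff_same_kernels
    {G₁ G₂ L : Type*} [Group G₁] [Group G₂] [Group L]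
    (H : Subgroup G₁) (K : Subgroup G₂) (H₀ : Subgroup G₁) (K₀ : Subgroup G₂)
    (hH₀ : H₀ ≤ H) (hK₀ : K₀ ≤ K)
    [hnH : (H₀.subgroupOf H).Normal] [hnK : (K₀.subgroupOf K).Normal]
    (φ φ' : H →* L) (ψ ψ' : K →* L)
    (hφ : Function.Surjective φ) (hφ' : Function.Surjective φ')
    (hψ : Function.Surjective ψ) (hψ' : Function.Surjective ψ')
    (hkφ : φ.ker = H₀.subgroupOf H) (hkφ' : φ'.ker = H₀.subgroupOf H)
    (hkψ : ψ.ker = K₀.subgroupOf K) (hkψ' : ψ'.ker = K₀.subgroupOf K) :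
    (∃ g : G₁ × G₂, (amalg H K φ ψ).map (MulAut.conj g).toMonoidHom = amalg H K φ' ψ') ↔
      ∃ (a : G₁) (b : G₂) (γ : L ≃* L),
        a ∈ Subgroup.normalizer (H : Set G₁) ⊓ Subgroup.normalizer (H₀ : Set G₁) ∧
        b ∈ Subgroup.normalizer (K : Set G₂) ⊓ Subgroup.normalizer (K₀ : Set G₂) ∧
        (∀ (h : G₁) (hh : h ∈ H) (hh' : a⁻¹ * h * a ∈ H),
          φ ⟨h, hh⟩ = γ (φ' ⟨a⁻¹ * h * a, hh'⟩)) ∧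
        (∀ (k : G₂) (hk : k ∈ K) (hk' : b⁻¹ * k * b ∈ K),
          ψ ⟨k, hk⟩ = γ (ψ' ⟨b⁻¹ * k * b, hk'⟩)) := by
  have kerφ : ∀ (x : G₁) (hx : x ∈ H), φ ⟨x, hx⟩ = 1 ↔ x ∈ H₀ := by
    intro x hx; rw [← MonoidHom.mem_ker, hkφ, Subgroup.mem_subgroupOf]
  have kerφ' : ∀ (x : G₁) (hx : x ∈ H), φ' ⟨x, hx⟩ = 1 ↔ x ∈ H₀ := by
    intro x hx; rw [← MonoidHom.mem_ker, hkφ', Subgroup.mem_subgroupOf]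
  have kerψ : ∀ (x : G₂) (hx : x ∈ K), ψ ⟨x, hx⟩ = 1 ↔ x ∈ K₀ := by
    intro x hx; rw [← MonoidHom.mem_ker, hkψ, Subgroup.mem_subgroupOf]
  have kerψ' : ∀ (x : G₂) (hx : x ∈ K), ψ' ⟨x, hx⟩ = 1 ↔ x ∈ K₀ := by
    intro x hx; rw [← MonoidHom.mem_ker, hkψ', Subgroup.mem_subgroupOf]
  constructor
  · rintro ⟨⟨a, b⟩, hmap⟩
    have key : ∀ x : G₁ × G₂, x ∈ amalg H K φ' ψ' ↔
        (a⁻¹ * x.1 * a, b⁻¹ * x.2 * b) ∈ amalg H K φ ψ := by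
      intro x
      rw [← hmap, Subgroup.mem_map_equiv]
      have : (MulAut.conj (a, b)).symm x = (a⁻¹ * x.1 * a, b⁻¹ * x.2 * b) := by
        simp [Prod.ext_iff]
      rw [this]
    -- a⁻¹ normalizes H
    have haH : ∀ x : G₁, x ∈ H ↔ a⁻¹ * x * a ∈ H := by
      intro x
      constructor
      · intro hx
        obtain ⟨y, hy⟩ := hψ' (φ' ⟨x, hx⟩)
        have hx' : (x, (y : G₂)) ∈ amalg H K φ' ψ' := ⟨hx, y.2, hy.symm⟩
        exact ((key _).mp hx').1
      · intro hx
        obtain ⟨k, hk⟩ := hψ (φ ⟨a⁻¹ * x * a, hx⟩)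
        have m2 : b⁻¹ * (b * (k : G₂) * b⁻¹) * b ∈ K := by
          have e : b⁻¹ * (b * (k : G₂) * b⁻¹) * b = (k : G₂) := by group
          rw [e]; exact k.2
        have hx' : (x, b * (k : G₂) * b⁻¹) ∈ amalg H K φ' ψ' := by
          rw [key]
          refine ⟨hx, m2, ?_⟩
          calc φ ⟨a⁻¹ * x * a, hx⟩ = ψ k := hk.symm
            _ = ψ ⟨b⁻¹ * (b * (k : G₂) * b⁻¹) * b, m2⟩ := by congr 1; exact Subtype.ext (by group)
        exact hx'.1
    -- b⁻¹ normalizes K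
    have hbK : ∀ x : G₂, x ∈ K ↔ b⁻¹ * x * b ∈ K := by
      intro x
      constructor
      · intro hx
        obtain ⟨y, hy⟩ := hφ' (ψ' ⟨x, hx⟩)
        have hx' : ((y : G₁), x) ∈ amalg H K φ' ψ' := ⟨y.2, hx, hy⟩
        obtain ⟨-, h₂, -⟩ := (key _).mp hx'
        exact h₂
      · intro hx
        obtain ⟨h, hh⟩ := hφ (ψ ⟨b⁻¹ * x * b, hx⟩)
        have m1 : a⁻¹ * (a * (h : G₁) * a⁻¹) * a ∈ H := by
          have e : a⁻¹ * (a * (h : G₁) * a⁻¹) * a = (h : G₁) := by group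
          rw [e]; exact h.2
        have hx' : (a * (h : G₁) * a⁻¹, x) ∈ amalg H K φ' ψ' := by
          rw [key]
          refine ⟨m1, hx, ?_⟩
          calc φ ⟨a⁻¹ * (a * (h : G₁) * a⁻¹) * a, m1⟩ = φ h := by congr 1; exact Subtype.ext (by group)
            _ = ψ ⟨b⁻¹ * x * b, hx⟩ := hh
        obtain ⟨-, h₂, -⟩ := hx'
        exact h₂
    -- a⁻¹ normalizes H₀
    have haH₀ : ∀ x : G₁, x ∈ H₀ ↔ a⁻¹ * x * a ∈ H₀ := by
      intro x
      constructor
      · intro hx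
        have hxH : x ∈ H := hH₀ hx
        have mem1 : (x, (1 : G₂)) ∈ amalg H K φ' ψ' := by
          refine ⟨hxH, K.one_mem, ?_⟩
          calc φ' ⟨x, hxH⟩ = 1 := (kerφ' x hxH).mpr hx
            _ = ψ' ⟨(1 : G₂), K.one_mem⟩ := (map_one ψ').symm
        obtain ⟨h₁, h₂, he⟩ := (key _).mp mem1
        refine (kerφ _ h₁).mp ?_
        calc φ ⟨a⁻¹ * x * a, h₁⟩ = ψ ⟨b⁻¹ * (1 : G₂) * b, h₂⟩ := he
          _ = ψ 1 := by congr 1; exact Subtype.ext (by simp)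
          _ = 1 := map_one ψ
      · intro hx
        have h1 : a⁻¹ * x * a ∈ H := hH₀ hx
        have hxH : x ∈ H := (haH x).mpr h1
        have m2 : b⁻¹ * (1 : G₂) * b ∈ K := by simpa using K.one_mem
        have mem1 : (x, (1 : G₂)) ∈ amalg H K φ' ψ' := by
          rw [key]
          refine ⟨h1, m2, ?_⟩
          calc φ ⟨a⁻¹ * x * a, h1⟩ = 1 := (kerφ _ h1).mpr hx
            _ = ψ 1 := (map_one ψ).symm
            _ = ψ ⟨b⁻¹ * (1 : G₂) * b, m2⟩ := by congr 1; exact Subtype.ext (by simp)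
        obtain ⟨h₁, h₂, he⟩ := mem1
        refine (kerφ' _ h₁).mp ?_
        calc φ' ⟨x, h₁⟩ = ψ' ⟨(1 : G₂), h₂⟩ := he
          _ = ψ' 1 := by congr 1
          _ = 1 := map_one ψ'
    -- b⁻¹ normalizes K₀
    have hbK₀ : ∀ x : G₂, x ∈ K₀ ↔ b⁻¹ * x * b ∈ K₀ := by
      intro x
      constructor
      · intro hx
        have hxK : x ∈ K := hK₀ hx
        have mem1 : ((1 : G₁), x) ∈ amalg H K φ' ψ' := by
          refine ⟨H.one_mem, hxK, ?_⟩
          calc φ' ⟨(1 : G₁), H.one_mem⟩ = 1 := map_one φ'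
            _ = ψ' ⟨x, hxK⟩ := ((kerψ' x hxK).mpr hx).symm
        obtain ⟨h₁, h₂, he⟩ := (key _).mp mem1
        refine (kerψ _ h₂).mp ?_
        calc ψ ⟨b⁻¹ * x * b, h₂⟩ = φ ⟨a⁻¹ * (1 : G₁) * a, h₁⟩ := he.symm
          _ = φ 1 := by congr 1; exact Subtype.ext (by simp)
          _ = 1 := map_one φ
      · intro hx
        have h2 : b⁻¹ * x * b ∈ K := hK₀ hx
        have hxK : x ∈ K := (hbK x).mpr h2
        have m1 : a⁻¹ * (1 : G₁) * a ∈ H := by simpa using H.one_mem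
        have mem1 : ((1 : G₁), x) ∈ amalg H K φ' ψ' := by
          rw [key]
          refine ⟨m1, h2, ?_⟩
          calc φ ⟨a⁻¹ * (1 : G₁) * a, m1⟩ = φ 1 := by congr 1; exact Subtype.ext (by simp)
            _ = 1 := map_one φ
            _ = ψ ⟨b⁻¹ * x * b, h2⟩ := ((kerψ _ h2).mpr hx).symm
        obtain ⟨h₁, h₂, he⟩ := mem1
        refine (kerψ' _ h₂).mp ?_
        calc ψ' ⟨x, h₂⟩ = φ' ⟨(1 : G₁), h₁⟩ := he.symm
          _ = φ' 1 := by congr 1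
          _ = 1 := map_one φ'
    -- construct γ
    have hc : ∀ h : H, a⁻¹ * (h : G₁) * a ∈ H := fun h => (haH _).mp h.2
    let c : H →* H := MonoidHom.mk' (fun h => ⟨a⁻¹ * (h : G₁) * a, hc h⟩)
      (fun h₁ h₂ => Subtype.ext (by push_cast; group))
    have hker : φ'.ker ≤ (φ.comp c).ker := by
      intro h hh
      rw [hkφ', Subgroup.mem_subgroupOf] at hh
      have h0 : a⁻¹ * (h : G₁) * a ∈ H₀ := (haH₀ _).mp hh
      exact MonoidHom.mem_ker.mpr ((kerφ _ (hc h)).mpr h0)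
    let θ : (H ⧸ φ'.ker) →* L := QuotientGroup.lift φ'.ker (φ.comp c) hker
    let e' : (H ⧸ φ'.ker) ≃* L := QuotientGroup.quotientKerEquivOfSurjective φ' hφ'
    let γ0 : L →* L := θ.comp e'.symm.toMonoidHom
    have hγ0 : ∀ h : H, γ0 (φ' h) = φ (c h) := by
      intro h
      have hs : e'.symm (φ' h) = QuotientGroup.mk h := by
        rw [MulEquiv.symm_apply_eq]
        exact QuotientGroup.kerLift_mk φ' h
      show θ (e'.symm (φ' h)) = φ (c h)
      rw [hs]
      rfl
    have hinj : Function.Injective γ0 := by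
      rw [injective_iff_map_eq_one]
      intro l hl
      obtain ⟨h, rfl⟩ := hφ' l
      rw [hγ0] at hl
      have h0 : a⁻¹ * (h : G₁) * a ∈ H₀ := (kerφ _ (hc h)).mp hl
      have : (h : G₁) ∈ H₀ := (haH₀ _).mpr h0
      exact (kerφ' _ h.2).mpr this
    have hsurj : Function.Surjective γ0 := by
      intro l
      obtain ⟨h, rfl⟩ := hφ l
      have hm : a * (h : G₁) * a⁻¹ ∈ H := by
        refine (haH _).mpr ?_
        have e : a⁻¹ * (a * (h : G₁) * a⁻¹) * a = (h : G₁) := by group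
        rw [e]; exact h.2
      refine ⟨φ' ⟨a * (h : G₁) * a⁻¹, hm⟩, ?_⟩
      rw [hγ0]
      have : c ⟨a * (h : G₁) * a⁻¹, hm⟩ = h := by
        apply Subtype.ext
        show a⁻¹ * (a * (h : G₁) * a⁻¹) * a = (h : G₁)
        group
      rw [this]
    let γ : L ≃* L := MulEquiv.ofBijective γ0 ⟨hinj, hsurj⟩
    have hγ : ∀ l, γ l = γ0 l := fun _ => rfl
    refine ⟨a⁻¹, b⁻¹, γ, ?_, ?_, ?_, ?_⟩
    · rw [Subgroup.mem_inf]
      constructor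
      · rw [Subgroup.mem_normalizer_iff]
        intro h; rw [inv_inv]; exact haH h
      · rw [Subgroup.mem_normalizer_iff]
        intro h; rw [inv_inv]; exact haH₀ h
    · rw [Subgroup.mem_inf]
      constructor
      · rw [Subgroup.mem_normalizer_iff]
        intro k; rw [inv_inv]; exact hbK k
      · rw [Subgroup.mem_normalizer_iff]
        intro k; rw [inv_inv]; exact hbK₀ k
    · intro h hh hh'
      rw [hγ, hγ0 ⟨a⁻¹⁻¹ * h * a⁻¹, hh'⟩]
      have : c ⟨a⁻¹⁻¹ * h * a⁻¹, hh'⟩ = ⟨h, hh⟩ := by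
        apply Subtype.ext
        show a⁻¹ * (a⁻¹⁻¹ * h * a⁻¹) * a = h
        group
      rw [this]
    · intro k hk hk'
      obtain ⟨x, hx⟩ := hφ' (ψ' ⟨b⁻¹⁻¹ * k * b⁻¹, hk'⟩)
      have memP' : ((x : G₁), b⁻¹⁻¹ * k * b⁻¹) ∈ amalg H K φ' ψ' := ⟨x.2, hk', hx⟩
      obtain ⟨m₁, m₂, he⟩ := (key _).mp memP'
      calc ψ ⟨k, hk⟩ = ψ ⟨b⁻¹ * (b⁻¹⁻¹ * k * b⁻¹) * b, m₂⟩ := by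
            congr 1; exact Subtype.ext (by group)
        _ = φ ⟨a⁻¹ * (x : G₁) * a, m₁⟩ := he.symm
        _ = φ (c x) := rfl
        _ = γ0 (φ' x) := (hγ0 x).symm
        _ = γ (ψ' ⟨b⁻¹⁻¹ * k * b⁻¹, hk'⟩) := by rw [hx, hγ]
  · rintro ⟨a, b, γ, haN, hbN, hφγ, hψγ⟩
    refine ⟨(a⁻¹, b⁻¹), ?_⟩
    ext x
    rw [Subgroup.mem_map_equiv]
    have hsymm : (MulAut.conj (a⁻¹, b⁻¹)).symm x = (a * x.1 * a⁻¹, b * x.2 * b⁻¹) := by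
      simp [Prod.ext_iff]
    rw [hsymm]
    have h1 : x.1 ∈ H ↔ a * x.1 * a⁻¹ ∈ H :=
      Subgroup.mem_normalizer_iff.mp (Subgroup.mem_inf.mp haN).1 x.1
    have h2 : x.2 ∈ K ↔ b * x.2 * b⁻¹ ∈ K :=
      Subgroup.mem_normalizer_iff.mp (Subgroup.mem_inf.mp hbN).1 x.2
    have e1 : a⁻¹ * (a * x.1 * a⁻¹) * a = x.1 := by group
    have e2 : b⁻¹ * (b * x.2 * b⁻¹) * b = x.2 := by group
    constructor
    · rintro ⟨m₁, m₂, he⟩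
      have n₁ : x.1 ∈ H := h1.mpr m₁
      have n₂ : x.2 ∈ K := h2.mpr m₂
      have w₁ : a⁻¹ * (a * x.1 * a⁻¹) * a ∈ H := by rw [e1]; exact n₁
      have w₂ : b⁻¹ * (b * x.2 * b⁻¹) * b ∈ K := by rw [e2]; exact n₂
      refine ⟨n₁, n₂, ?_⟩
      have r1 := hφγ (a * x.1 * a⁻¹) m₁ w₁
      have r2 := hψγ (b * x.2 * b⁻¹) m₂ w₂
      have t1 : (⟨a⁻¹ * (a * x.1 * a⁻¹) * a, w₁⟩ : H) = ⟨x.1, n₁⟩ := Subtype.ext e1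
      have t2 : (⟨b⁻¹ * (b * x.2 * b⁻¹) * b, w₂⟩ : K) = ⟨x.2, n₂⟩ := Subtype.ext e2
      rw [t1] at r1
      rw [t2] at r2
      have : γ (φ' ⟨x.1, n₁⟩) = γ (ψ' ⟨x.2, n₂⟩) := by rw [← r1, ← r2]; exact he
      exact γ.injective this
    · rintro ⟨m₁, m₂, he⟩
      have n₁ : a * x.1 * a⁻¹ ∈ H := h1.mp m₁
      have n₂ : b * x.2 * b⁻¹ ∈ K := h2.mp m₂
      have w₁ : a⁻¹ * (a * x.1 * a⁻¹) * a ∈ H := by rw [e1]; exact m₁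
      have w₂ : b⁻¹ * (b * x.2 * b⁻¹) * b ∈ K := by rw [e2]; exact m₂
      refine ⟨n₁, n₂, ?_⟩
      have r1 := hφγ (a * x.1 * a⁻¹) n₁ w₁
      have r2 := hψγ (b * x.2 * b⁻¹) n₂ w₂
      have t1 : (⟨a⁻¹ * (a * x.1 * a⁻¹) * a, w₁⟩ : H) = ⟨x.1, m₁⟩ := Subtype.ext e1
      have t2 : (⟨b⁻¹ * (b * x.2 * b⁻¹) * b, w₂⟩ : K) = ⟨x.2, m₂⟩ := Subtype.ext e2
      rw [t1] at r1
      rw [t2] at r2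
      rw [r1, r2, he]
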